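/- Let V be a finite-dimensional complex vector space, A, B alternating bilinear forms on V, and U ⊆ V a bi-isotropic admissible subspace with common orthogonal W (so U ⊆ W and (A+λB)(U, W) = 0 for all λ). Let π : W → Q := W/U be the quotient map and let A', B' be the induced bilinear forms on Q, characterized by A'(π x, π y) = A(x, y) and B'(π x, π y) = B(x, y) for x, y ∈ W. If L ⊆ V is a bi-Lagrangian subspace of the pencil {A + λB}, then L' := π(L ∩ W) = ((L ∩ W) + U)/U is a bi-Lagrangian subspace of Q with respect to the induced pencil {A' + λB'}; that is, A'(x', y') = 0 and B'(x', y') = 0 for all x', y' ∈ L', and dim L' = dim Q − (1/2)·max_{λ ∈ ℂ ∪ {∞}} rank(A' + λB') (with rank at λ = ∞ meaning rank B'). Moreover, if L is merely bi-isotropic, then L' is bi-isotropic in Q. -/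

import Mathlib

open Module LinearMap

variable {V : Type*} [AddCommGroup V] [Module ℂ V]

/-- The skew-orthogonal complement of a subspace `U` with respect to a
bilinear form `C`. -/
noncomputable def orthComp (C : V →ₗ[ℂ] V →ₗ[ℂ] ℂ) (U : Submodule ℂ V) : Submodule ℂ V :=
  ⨅ u ∈ U, LinearMap.ker (C u)

/-- The rank of a bilinear form: the rank of the induced map `V → V*`. -/
noncomputable def formRank (C : V →ₗ[ℂ] V →ₗ[ℂ] ℂ) : ℕ :=
  Module.finrank ℂ (LinearMap.range C)

/-- The member of the pencil `{A + λB : λ ∈ ℂ ∪ {∞}}` at `λ`; `none` plays the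
role of `λ = ∞`, where the form is `B`. -/
noncomputable def pencilForm (A B : V →ₗ[ℂ] V →ₗ[ℂ] ℂ) : Option ℂ → V →ₗ[ℂ] V →ₗ[ℂ] ℂ
  | none => B
  | some l => A + l • B

/-- The rank of the pencil: `max_{λ ∈ ℂ ∪ {∞}} rank (A + λB)`. -/
noncomputable def pencilRank (A B : V →ₗ[ℂ] V →ₗ[ℂ] ℂ) : ℕ :=
  ⨆ l : Option ℂ, formRank (pencilForm A B l)

/-- A subspace `U` is bi-isotropic if both `A` and `B` vanish on `U × U`. -/
def biIsotropic (A B : V →ₗ[ℂ] V →ₗ[ℂ] ℂ) (U : Submodule ℂ V) : Prop :=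
  ∀ u ∈ U, ∀ v ∈ U, A u v = 0 ∧ B u v = 0


section Helpers

set_option maxHeartbeats 1000000

lemma dual_pi_apply {r : ℕ} (ψ : (Fin r → ℂ) →ₗ[ℂ] ℂ) (g : Fin r → ℂ) :
    ψ g = ∑ i, g i * ψ (Pi.single i 1) := by
  classical
  conv_lhs => rw [pi_eq_sum_univ g]
  rw [map_sum]
  refine Finset.sum_congr rfl fun i _ => ?_
  rw [map_smul, smul_eq_mul]
  congr 1
  congr 1
  funext j
  simp [Pi.single_apply, eq_comm]

lemma indep_of_det_ne_zero {r : ℕ} (f : Fin r → (V →ₗ[ℂ] ℂ)) (w : Fin r → V)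
    (h : (Matrix.of fun i j => f i (w j)).det ≠ 0) : LinearIndependent ℂ f := by
  have hU : IsUnit (Matrix.of fun i j => f i (w j)) :=
    (Matrix.isUnit_iff_isUnit_det _).2 (isUnit_iff_ne_zero.2 h)
  have hrows := Matrix.linearIndependent_rows_iff_isUnit.2 hU
  refine LinearIndependent.of_comp
    (LinearMap.pi fun j => LinearMap.applyₗ (w j) : (V →ₗ[ℂ] ℂ) →ₗ[ℂ] (Fin r → ℂ)) ?_
  convert hrows using 1
  · funext i j; rfl
  · rfl
  · rfl

lemma exists_dual_family {r : ℕ} (f : Fin r → (V →ₗ[ℂ] ℂ)) (hf : LinearIndependent ℂ f) :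
    ∃ w : Fin r → V, (Matrix.of fun i j => f i (w j)).det ≠ 0 := by
  classical
  set Φ : V →ₗ[ℂ] (Fin r → ℂ) := LinearMap.pi f with hΦ
  have hsurj : Function.Surjective Φ := by
    rw [← LinearMap.range_eq_top]
    by_contra hne
    obtain ⟨ψ, hψne, hψ⟩ :=
      Submodule.exists_dual_map_eq_bot_of_lt_top (lt_top_iff_ne_top.2 hne) inferInstance
    have hzero : ∀ x : V, ψ (Φ x) = 0 := by
      intro x
      have : ψ (Φ x) ∈ (LinearMap.range Φ).map ψ :=
        Submodule.mem_map_of_mem (LinearMap.mem_range_self Φ x)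
      rw [hψ] at this
      exact this
    have hcoef : ∀ i, ψ (Pi.single i (1 : ℂ)) = 0 := by
      refine (Fintype.linearIndependent_iff.1 hf) (fun i => ψ (Pi.single i (1 : ℂ))) ?_
      ext x
      have := hzero x
      rw [dual_pi_apply] at this
      simpa [hΦ, LinearMap.pi_apply, mul_comm] using this
    apply hψne
    apply Basis.ext (Pi.basisFun ℂ (Fin r))
    intro i
    simp [hcoef i]
  choose w hw using fun j => hsurj (Pi.single j (1 : ℂ))
  refine ⟨w, ?_⟩
  have : (Matrix.of fun i j => f i (w j)) = (1 : Matrix (Fin r) (Fin r) ℂ) := by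
    ext i j
    have := congrFun (hw j) i
    simp only [hΦ, LinearMap.pi_apply] at this
    simp [Matrix.of_apply, this, Matrix.one_apply, Pi.single_apply, eq_comm]
  rw [this, Matrix.det_one]
  exact one_ne_zero

lemma bad_indep_finite (A B : V →ₗ[ℂ] V →ₗ[ℂ] ℂ) {r : ℕ} (v : Fin r → V) (l0 : ℂ)
    (h : LinearIndependent ℂ fun i => (A + l0 • B) (v i)) :
    {l : ℂ | ¬ LinearIndependent ℂ fun i => (A + l • B) (v i)}.Finite := by
  classical
  obtain ⟨w, hw⟩ := exists_dual_family _ h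
  set N : Matrix (Fin r) (Fin r) (Polynomial ℂ) :=
    Matrix.of fun i j => Polynomial.C (A (v i) (w j)) + Polynomial.X * Polynomial.C (B (v i) (w j))
    with hN
  have heval : ∀ l : ℂ,
      Polynomial.eval l N.det = (Matrix.of fun i j => (A + l • B) (v i) (w j)).det := by
    intro l
    have h1 := RingHom.map_det (Polynomial.evalRingHom l) N
    rw [show (Polynomial.evalRingHom l) N.det = Polynomial.eval l N.det from rfl] at h1
    rw [h1]
    congr 1
    ext i j
    rw [RingHom.mapMatrix_apply, Matrix.map_apply]
    simp only [hN, Matrix.of_apply, Polynomial.coe_evalRingHom, Polynomial.eval_add,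
      Polynomial.eval_mul, Polynomial.eval_C, Polynomial.eval_X, LinearMap.add_apply,
      LinearMap.smul_apply, smul_eq_mul]
  have hp0 : N.det ≠ 0 := by
    intro h0
    apply hw
    rw [← heval l0, h0, Polynomial.eval_zero]
  refine (Polynomial.finite_setOf_isRoot hp0).subset ?_
  intro l hl
  simp only [Set.mem_setOf_eq] at hl ⊢
  by_contra hroot
  exact hl (indep_of_det_ne_zero _ w (by rw [← heval l]; exact hroot))

lemma bad_indep_finite' (A B : V →ₗ[ℂ] V →ₗ[ℂ] ℂ) {r : ℕ} (v : Fin r → V) (l0 : Option ℂ)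
    (h : LinearIndependent ℂ fun i => pencilForm A B l0 (v i)) :
    {l : ℂ | ¬ LinearIndependent ℂ fun i => (A + l • B) (v i)}.Finite := by
  classical
  cases l0 with
  | some l0 => exact bad_indep_finite A B v l0 h
  | none =>
    have h0 : LinearIndependent ℂ fun i => (B + (0 : ℂ) • A) (v i) := by
      simpa [pencilForm] using h
    have hS := bad_indep_finite B A v 0 h0
    refine (((hS.image Inv.inv).union (Set.finite_singleton 0))).subset ?_
    intro l hl
    simp only [Set.mem_setOf_eq] at hl
    rcases eq_or_ne l 0 with rfl | hlne
    · exact Or.inr rfl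
    refine Or.inl ⟨l⁻¹, ?_, inv_inv l⟩
    simp only [Set.mem_setOf_eq]
    intro hindep
    apply hl
    have heq : (fun i => (A + l • B) (v i))
        = fun i => (Units.mk0 l hlne : ℂˣ) • ((B + l⁻¹ • A) (v i)) := by
      funext i
      simp only [LinearMap.add_apply, LinearMap.smul_apply, Units.smul_def, Units.val_mk0,
        smul_add, smul_smul, mul_inv_cancel₀ hlne, one_smul]
      abel
    rw [heq]
    exact hindep.units_smul (fun _ => Units.mk0 l hlne)

lemma formRank_ge_iff [FiniteDimensional ℂ V] (C : V →ₗ[ℂ] V →ₗ[ℂ] ℂ) {r : ℕ} :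
    r ≤ formRank C ↔ ∃ v : Fin r → V, LinearIndependent ℂ fun i => C (v i) := by
  constructor
  · intro hr
    obtain ⟨f, hf⟩ := exists_linearIndependent_of_le_finrank (R := ℂ) (M := LinearMap.range C) hr
    have hmem : ∀ i, ∃ x : V, C x = (f i : V →ₗ[ℂ] ℂ) := fun i => (f i).2
    choose v hv using hmem
    refine ⟨v, ?_⟩
    have : (fun i => C (v i)) = (LinearMap.range C).subtype ∘ f := by
      funext i; simp [hv i]
    rw [this]
    exact hf.map' _ (Submodule.ker_subtype _)
  · rintro ⟨v, hv⟩
    have hv' : LinearIndependent ℂ fun i => (⟨C (v i), LinearMap.mem_range_self C (v i)⟩ :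
        LinearMap.range C) := by
      refine LinearIndependent.of_comp (LinearMap.range C).subtype ?_
      convert hv using 1
      rfl
    simpa [formRank] using hv'.fintype_card_le_finrank

lemma pencil_generic [FiniteDimensional ℂ V] (A B : V →ₗ[ℂ] V →ₗ[ℂ] ℂ) :
    {l : ℂ | formRank (A + l • B) ≠ pencilRank A B}.Finite := by
  classical
  have hbdd : BddAbove (Set.range fun l : Option ℂ => formRank (pencilForm A B l)) := by
    refine ⟨finrank ℂ (V →ₗ[ℂ] ℂ), ?_⟩
    rintro x ⟨l, rfl⟩
    exact Submodule.finrank_le _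
  have hmem : pencilRank A B ∈ Set.range fun l : Option ℂ => formRank (pencilForm A B l) := by
    have hne : (Set.range fun l : Option ℂ => formRank (pencilForm A B l)).Nonempty :=
      ⟨_, ⟨none, rfl⟩⟩
    exact Nat.sSup_mem hne hbdd
  obtain ⟨l0, hl0⟩ := hmem
  have hge : pencilRank A B ≤ formRank (pencilForm A B l0) := by simpa using hl0.ge
  obtain ⟨v, hv⟩ := (formRank_ge_iff (pencilForm A B l0)).1 hge
  have hfin := bad_indep_finite' A B v l0 hv
  refine hfin.subset ?_
  intro l hl
  simp only [Set.mem_setOf_eq] at hl ⊢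
  intro hindep
  apply hl
  have h1 : pencilRank A B ≤ formRank (A + l • B) := by
    rw [show (A + l • B) = pencilForm A B (some l) from rfl]
    exact (formRank_ge_iff _).2 ⟨v, hindep⟩
  have h2 : formRank (A + l • B) ≤ pencilRank A B := by
    rw [show (A + l • B) = pencilForm A B (some l) from rfl]
    exact le_ciSup hbdd (some l)
  omega

lemma mem_orthComp {C : V →ₗ[ℂ] V →ₗ[ℂ] ℂ} {S : Submodule ℂ V} {x : V} :
    x ∈ orthComp C S ↔ ∀ u ∈ S, C u x = 0 := by
  simp [orthComp, Submodule.mem_iInf, LinearMap.mem_ker]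

lemma orthComp_eq_dualCoannihilator (C : V →ₗ[ℂ] V →ₗ[ℂ] ℂ) (S : Submodule ℂ V) :
    orthComp C S = (S.map C).dualCoannihilator := by
  ext x
  rw [mem_orthComp, Submodule.mem_dualCoannihilator]
  constructor
  · rintro h φ ⟨u, hu, rfl⟩
    exact h u hu
  · intro h u hu
    exact h (C u) ⟨u, hu, rfl⟩

lemma finrank_map_add_finrank_orthComp [FiniteDimensional ℂ V] (C : V →ₗ[ℂ] V →ₗ[ℂ] ℂ)
    (S : Submodule ℂ V) :
    finrank ℂ (S.map C) + finrank ℂ (orthComp C S) = finrank ℂ V := by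
  rw [orthComp_eq_dualCoannihilator]
  exact Subspace.finrank_add_finrank_dualCoannihilator_eq _

lemma finrank_comap_subtype [FiniteDimensional ℂ V] (p S : Submodule ℂ V) :
    finrank ℂ (p.comap S.subtype) = finrank ℂ (S ⊓ p : Submodule ℂ V) := by
  have h := (Submodule.equivMapOfInjective S.subtype S.injective_subtype
    (p.comap S.subtype)).finrank_eq
  rwa [Submodule.map_comap_subtype] at h

lemma finrank_map_add_finrank_inf_ker {M : Type*} [AddCommGroup M] [Module ℂ M]
    [FiniteDimensional ℂ V] (f : V →ₗ[ℂ] M) (S : Submodule ℂ V) :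
    finrank ℂ (S.map f) + finrank ℂ (S ⊓ LinearMap.ker f : Submodule ℂ V) = finrank ℂ S := by
  have h := LinearMap.finrank_range_add_finrank_ker (f.comp S.subtype)
  rw [LinearMap.range_comp, Submodule.range_subtype, LinearMap.ker_comp,
    finrank_comap_subtype] at h
  exact h

lemma orthComp_sup (C : V →ₗ[ℂ] V →ₗ[ℂ] ℂ) (S T : Submodule ℂ V) :
    orthComp C (S ⊔ T) = orthComp C S ⊓ orthComp C T := by
  ext x
  simp only [mem_orthComp, Submodule.mem_inf]
  constructor
  · intro h
    exact ⟨fun u hu => h u (Submodule.mem_sup_left hu),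
      fun u hu => h u (Submodule.mem_sup_right hu)⟩
  · rintro ⟨h1, h2⟩ u hu
    obtain ⟨a, ha, b, hb, rfl⟩ := Submodule.mem_sup.1 hu
    rw [map_add, LinearMap.add_apply, h1 a ha, h2 b hb, add_zero]

/-- Single-form linear symplectic reduction of Lagrangian-type subspaces. -/
lemma single_reduction [FiniteDimensional ℂ V] (C : V →ₗ[ℂ] V →ₗ[ℂ] ℂ) (hC : C.IsAlt)
    (U W : Submodule ℂ V) (hUW : U ≤ W) (hW : orthComp C U = W)
    (horth : ∀ u ∈ U, ∀ w ∈ W, C u w = 0)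
    (C' : (W ⧸ U.comap W.subtype) →ₗ[ℂ] (W ⧸ U.comap W.subtype) →ₗ[ℂ] ℂ)
    (hC' : ∀ x y : W, C' (Submodule.Quotient.mk x) (Submodule.Quotient.mk y)
      = C (x : V) (y : V))
    (L : Submodule ℂ V)
    (hLiso : ∀ u ∈ L, ∀ v ∈ L, C u v = 0)
    (hLdim : 2 * finrank ℂ L + formRank C = 2 * finrank ℂ V) :
    2 * finrank ℂ (Submodule.map (U.comap W.subtype).mkQ (L.comap W.subtype)) + formRank C'
      = 2 * finrank ℂ (W ⧸ U.comap W.subtype) := by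
  classical
  set R : Submodule ℂ V := LinearMap.ker C with hR
  have hskew : ∀ x y : V, C x y = -C y x := fun x y => (hC.neg y x).symm
  have hkerC : ∀ x ∈ R, ∀ y : V, C x y = 0 := by
    intro x hx y
    rw [LinearMap.mem_ker.1 hx]
    rfl
  -- basic rank equations
  have e2 : formRank C + finrank ℂ R = finrank ℂ V :=
    LinearMap.finrank_range_add_finrank_ker C
  -- isotropic bound
  have hiso_bound : ∀ M : Submodule ℂ V, (∀ x ∈ M, ∀ y ∈ M, C x y = 0) →
      2 * finrank ℂ M ≤ finrank ℂ V + finrank ℂ (M ⊓ R : Submodule ℂ V) := by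
    intro M hM
    have hle : M ≤ orthComp C M := fun v hv => mem_orthComp.2 fun u hu => hM u hu v hv
    have h1 := finrank_map_add_finrank_orthComp C M
    have h2 := finrank_map_add_finrank_inf_ker C M
    rw [← hR] at h2
    have h3 : finrank ℂ M ≤ finrank ℂ (orthComp C M) := Submodule.finrank_mono hle
    omega
  -- R ≤ L
  have hLR_iso : ∀ x ∈ L ⊔ R, ∀ y ∈ L ⊔ R, C x y = 0 := by
    intro x hx y hy
    obtain ⟨a, ha, b, hb, rfl⟩ := Submodule.mem_sup.1 hx
    obtain ⟨a', ha', b', hb', rfl⟩ := Submodule.mem_sup.1 hy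
    simp only [map_add, LinearMap.add_apply]
    have h1 : C a a' = 0 := hLiso a ha a' ha'
    have h2 : C a b' = 0 := by rw [hskew a b', hkerC b' hb' a, neg_zero]
    have h3 : C b a' = 0 := hkerC b hb a'
    have h4 : C b b' = 0 := hkerC b hb b'
    rw [h1, h2, h3, h4]
    ring
  have hRL : R ≤ L := by
    have h1 := hiso_bound (L ⊔ R) hLR_iso
    have hinf : (L ⊔ R) ⊓ R = R := inf_eq_right.2 le_sup_right
    rw [hinf] at h1
    have h2 : finrank ℂ L ≤ finrank ℂ (L ⊔ R : Submodule ℂ V) :=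
      Submodule.finrank_mono le_sup_left
    have h3 : L = L ⊔ R := Submodule.eq_of_le_of_finrank_le le_sup_left (by omega)
    rw [h3]
    exact le_sup_right
  -- L is Lagrangian: L = orthComp C L
  have hLle : L ≤ orthComp C L := fun v hv => mem_orthComp.2 fun u hu => hLiso u hu v hv
  have hO2L := finrank_map_add_finrank_orthComp C L
  have hO3L := finrank_map_add_finrank_inf_ker C L
  rw [← hR] at hO3L
  have hLRinf : L ⊓ R = R := inf_eq_right.2 hRL
  rw [hLRinf] at hO3L
  have hLorth : L = orthComp C L :=
    Submodule.eq_of_le_of_finrank_le hLle (by omega)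
  -- L ⊓ W = orthComp C (L ⊔ U)
  have hLW : orthComp C (L ⊔ U) = L ⊓ W := by
    rw [orthComp_sup, ← hLorth, hW]
  have e5a := finrank_map_add_finrank_orthComp C (L ⊔ U)
  rw [hLW] at e5a
  have e5b := finrank_map_add_finrank_inf_ker C (L ⊔ U)
  rw [← hR] at e5b
  have hLUR : (L ⊔ U) ⊓ R = R := inf_eq_right.2 (hRL.trans le_sup_left)
  rw [hLUR] at e5b
  have e6 := Submodule.finrank_sup_add_finrank_inf_eq L U
  -- W side
  have hRW : R ≤ W := by
    rw [← hW]
    intro x hx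
    exact mem_orthComp.2 fun u _ => by rw [hskew u x, hkerC x hx u, neg_zero]
  have eU := finrank_map_add_finrank_orthComp C U
  rw [hW] at eU
  have eU2 := finrank_map_add_finrank_inf_ker C U
  rw [← hR] at eU2
  have eW := finrank_map_add_finrank_orthComp C W
  have eW2 := finrank_map_add_finrank_inf_ker C W
  rw [← hR] at eW2
  have hWR : W ⊓ R = R := inf_eq_right.2 hRW
  rw [hWR] at eW2
  have eUR := Submodule.finrank_sup_add_finrank_inf_eq U R
  have hURle : U ⊔ R ≤ orthComp C W := by
    refine sup_le ?_ ?_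
    · intro u hu
      exact mem_orthComp.2 fun w hw => by rw [hskew w u, horth u hu w hw, neg_zero]
    · intro x hx
      exact mem_orthComp.2 fun w _ => by rw [hskew w x, hkerC x hx w, neg_zero]
  have hUReq : U ⊔ R = orthComp C W :=
    Submodule.eq_of_le_of_finrank_le hURle (by omega)
  -- quotient side
  have eq_k : finrank ℂ (U.comap W.subtype) = finrank ℂ U := by
    rw [finrank_comap_subtype, inf_eq_right.2 hUW]
  have eQ : finrank ℂ (W ⧸ U.comap W.subtype) + finrank ℂ (U.comap W.subtype) = finrank ℂ W :=
    Submodule.finrank_quotient_add_finrank _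
  -- dimension of L'
  have eL'a := finrank_map_add_finrank_inf_ker (U.comap W.subtype).mkQ (L.comap W.subtype)
  rw [Submodule.ker_mkQ, ← Submodule.comap_inf, finrank_comap_subtype,
    finrank_comap_subtype,
    show W ⊓ (L ⊓ U) = L ⊓ U from inf_eq_right.2 (inf_le_right.trans hUW),
    show W ⊓ L = L ⊓ W from inf_comm W L] at eL'a
  -- kernel of C'
  have hC'ker : LinearMap.ker C' = Submodule.map (U.comap W.subtype).mkQ
      ((U ⊔ R).comap W.subtype) := by
    ext q
    obtain ⟨x, rfl⟩ := Submodule.mkQ_surjective (U.comap W.subtype) q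
    have hleft : (U.comap W.subtype).mkQ x ∈ LinearMap.ker C'
        ↔ ∀ y : W, C (x : V) (y : V) = 0 := by
      rw [LinearMap.mem_ker]
      constructor
      · intro h y
        have h0 : C' (Submodule.Quotient.mk x) = 0 := h
        rw [← hC' x y, h0, LinearMap.zero_apply]
      · intro h
        refine LinearMap.ext fun q' => ?_
        obtain ⟨y, rfl⟩ := Submodule.mkQ_surjective (U.comap W.subtype) q'
        show C' (Submodule.Quotient.mk x) (Submodule.Quotient.mk y) = 0
        rw [hC' x y, h y]
    have hright : (U.comap W.subtype).mkQ x ∈ Submodule.map (U.comap W.subtype).mkQ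
        ((U ⊔ R).comap W.subtype) ↔ (x : V) ∈ U ⊔ R := by
      constructor
      · rintro ⟨y, hy, hyx⟩
        have hxy : x - y ∈ U.comap W.subtype := by
          rw [← Submodule.ker_mkQ (U.comap W.subtype), LinearMap.mem_ker, map_sub, hyx, sub_self]
        have hxyU : ((x - y : W) : V) ∈ U := hxy
        have hxeq : (x : V) = ((x - y : W) : V) + (y : V) := by
          push_cast
          abel
        rw [hxeq]
        exact Submodule.add_mem _ (Submodule.mem_sup_left hxyU) hy
      · intro hx
        exact ⟨x, hx, rfl⟩
    rw [hleft, hright, hUReq]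
    constructor
    · intro h
      exact mem_orthComp.2 fun w hw => by
        rw [hskew w x, h ⟨w, hw⟩, neg_zero]
    · intro h y
      rw [hskew, mem_orthComp.1 h y y.2, neg_zero]
  -- rank-nullity for C'
  have eC' : formRank C' + finrank ℂ (LinearMap.ker C') = finrank ℂ (W ⧸ U.comap W.subtype) :=
    LinearMap.finrank_range_add_finrank_ker C'
  rw [hC'ker] at eC'
  have ekerdim := finrank_map_add_finrank_inf_ker (U.comap W.subtype).mkQ
    ((U ⊔ R).comap W.subtype)
  rw [Submodule.ker_mkQ] at ekerdim
  have h1 : (U ⊔ R).comap W.subtype ⊓ U.comap W.subtype = U.comap W.subtype :=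
    inf_eq_right.2 (Submodule.comap_mono le_sup_left)
  rw [h1] at ekerdim
  have h2 : finrank ℂ ((U ⊔ R).comap W.subtype) = finrank ℂ (U ⊔ R : Submodule ℂ V) := by
    rw [finrank_comap_subtype, inf_eq_right.2 (sup_le hUW hRW)]
  rw [h2] at ekerdim
  omega

end Helpers

/-- Linear bi-Poisson reduction: if `U` is bi-isotropic and
admissible with common orthogonal `W`, and `A'`, `B'` are the induced forms on
`Q = W/U`, then the reduction `L' = ((L ∩ W) + U)/U` of a bi-Lagrangian subspace
`L` is bi-Lagrangian in `Q` (bi-isotropy is stated as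
`2·dim L' + rk 𝓛' = 2·dim Q`, i.e. `dim L' = dim Q − (1/2)·rk 𝓛'`).
Moreover, the reduction of any bi-isotropic subspace is bi-isotropic. -/
theorem statement_1 [FiniteDimensional ℂ V]
    (A B : V →ₗ[ℂ] V →ₗ[ℂ] ℂ) (hAalt : A.IsAlt) (hBalt : B.IsAlt)
    (U W : Submodule ℂ V)
    (hbiiso : biIsotropic A B U)
    (hadm : {l : ℂ | orthComp (A + l • B) U ≠ W}.Finite)
    (hUW : U ≤ W)
    (horth : ∀ l : ℂ, ∀ u ∈ U, ∀ w ∈ W, (A + l • B) u w = 0)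
    (A' B' : (W ⧸ U.comap W.subtype) →ₗ[ℂ] (W ⧸ U.comap W.subtype) →ₗ[ℂ] ℂ)
    (hA' : ∀ x y : W, A' (Submodule.Quotient.mk x) (Submodule.Quotient.mk y)
      = A (x : V) (y : V))
    (hB' : ∀ x y : W, B' (Submodule.Quotient.mk x) (Submodule.Quotient.mk y)
      = B (x : V) (y : V))
    (L : Submodule ℂ V)
    (hLiso : biIsotropic A B L)
    (hLdim : 2 * finrank ℂ L + pencilRank A B = 2 * finrank ℂ V) :
    (biIsotropic A' B' (Submodule.map (U.comap W.subtype).mkQ (L.comap W.subtype)) ∧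
      2 * finrank ℂ (Submodule.map (U.comap W.subtype).mkQ (L.comap W.subtype))
          + pencilRank A' B'
        = 2 * finrank ℂ (W ⧸ U.comap W.subtype)) ∧
    (∀ M : Submodule ℂ V, biIsotropic A B M →
      biIsotropic A' B' (Submodule.map (U.comap W.subtype).mkQ (M.comap W.subtype))) := by
  have part3 : ∀ M : Submodule ℂ V, biIsotropic A B M →
      biIsotropic A' B' (Submodule.map (U.comap W.subtype).mkQ (M.comap W.subtype)) := by
    intro M hM u hu v hv
    obtain ⟨x, hx, rfl⟩ := hu
    obtain ⟨y, hy, rfl⟩ := hv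
    have hx' : (x : V) ∈ M := hx
    have hy' : (y : V) ∈ M := hy
    constructor
    · have := hA' x y
      rw [show (Submodule.Quotient.mk x : W ⧸ U.comap W.subtype)
        = (U.comap W.subtype).mkQ x from rfl, show (Submodule.Quotient.mk y : W ⧸ U.comap W.subtype)
        = (U.comap W.subtype).mkQ y from rfl] at this
      rw [this]
      exact (hM _ hx' _ hy').1
    · have := hB' x y
      rw [show (Submodule.Quotient.mk x : W ⧸ U.comap W.subtype)
        = (U.comap W.subtype).mkQ x from rfl, show (Submodule.Quotient.mk y : W ⧸ U.comap W.subtype)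
        = (U.comap W.subtype).mkQ y from rfl] at this
      rw [this]
      exact (hM _ hx' _ hy').2
  refine ⟨⟨part3 L hLiso, ?_⟩, part3⟩
  -- choose a good parameter value
  have hbad := (hadm.union (pencil_generic A B)).union (pencil_generic A' B')
  obtain ⟨l0, hl0⟩ := hbad.infinite_compl.nonempty
  simp only [Set.mem_compl_iff, Set.mem_union, Set.mem_setOf_eq, not_or, not_not] at hl0
  obtain ⟨⟨hW, hr⟩, hr'⟩ := hl0
  have hCalt : (A + l0 • B).IsAlt := fun v => by
    simp [LinearMap.add_apply, LinearMap.smul_apply, hAalt v, hBalt v]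
  have hC'mk : ∀ x y : W, (A' + l0 • B') (Submodule.Quotient.mk x) (Submodule.Quotient.mk y)
      = (A + l0 • B) (x : V) (y : V) := by
    intro x y
    simp only [LinearMap.add_apply, LinearMap.smul_apply, hA' x y, hB' x y, smul_eq_mul]
  have hLiso' : ∀ u ∈ L, ∀ v ∈ L, (A + l0 • B) u v = 0 := by
    intro u hu v hv
    simp [LinearMap.add_apply, LinearMap.smul_apply, (hLiso u hu v hv).1, (hLiso u hu v hv).2]
  have horth' : ∀ u ∈ U, ∀ w ∈ W, (A + l0 • B) u w = 0 := horth l0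
  have := single_reduction (A + l0 • B) hCalt U W hUW hW horth' (A' + l0 • B') hC'mk L hLiso'
    (by rw [hr]; exact hLdim)
  rw [hr'] at this
  exact this
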